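/- arXiv:1306.6295 — 2 statements merged into one kernel-verified Lean document; each statement's English description precedes it below -/
import Mathlib

section
/- Let P be a probability distribution on ℝ^m, and let X and X' be independent random vectors each distributed according to P. Then the χ²-divergence from the Gaussian location mixture N(0, I_m) * P to the standard Gaussian N(0, I_m) equals E[exp(⟨X, X'⟩)] − 1. -/
open MeasureTheory ProbabilityTheory ENNReal

/-- The standard Gaussian measure `N(0, I_m)` on ℝ^m. -/
noncomputable def stdGaussian (m : ℕ) : Measure (Fin m → ℝ) :=
  Measure.pi fun _ => gaussianReal 0 1

/-- The χ²-divergence `χ²(P‖Q) = ∫ (dP/dQ)² dQ − 1`. -/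
noncomputable def chiSqDiv {α : Type*} [MeasurableSpace α] (P Q : Measure α) : ℝ≥0∞ :=
  (∫⁻ x, (P.rnDeriv Q x) ^ 2 ∂Q) - 1

section Aux

/-- Tonelli for finite products: lintegral of a product of single-coordinate functions. -/
lemma lintegral_pi_prod {n : ℕ} {α : Type*} [MeasurableSpace α]
    (μ : Fin n → Measure α) [∀ i, SigmaFinite (μ i)]
    (f : Fin n → α → ℝ≥0∞) (hf : ∀ i, Measurable (f i)) :
    ∫⁻ x : Fin n → α, ∏ i, f i (x i) ∂Measure.pi μ = ∏ i, ∫⁻ x, f i x ∂μ i := by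
  induction n with
  | zero => simp [Measure.pi_univ]
  | succ n ih =>
    have h := measurePreserving_piFinSuccAbove μ 0
    rw [MeasurePreserving.lintegral_map_equiv (fun x => ∏ i, f i (x i))
      (MeasurableEquiv.piFinSuccAbove (fun _ : Fin (n+1) => α) 0).symm
      (MeasurePreserving.symm _ h)]
    simp_rw [MeasurableEquiv.piFinSuccAbove_symm_apply, Fin.insertNthEquiv,
      Fin.prod_univ_succ, Fin.insertNth_zero, Equiv.coe_fn_mk, Fin.cons_succ,
      Fin.zero_succAbove, cast_eq, Fin.cons_zero]
    have hg : Measurable (fun b : Fin n → α => ∏ x, f x.succ (b x)) :=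
      Finset.measurable_prod Finset.univ
        (fun i _ => ((hf i.succ).comp (measurable_pi_apply i) :
          Measurable fun b : Fin n → α => f i.succ (b i)))
    rw [lintegral_prod_mul (f := f 0) (g := fun b : Fin n → α => ∏ x, f x.succ (b x))
      (hf 0).aemeasurable hg.aemeasurable]
    rw [ih (fun i => μ i.succ) (fun i => f i.succ) (fun i => hf _)]

/-- 1D Cameron–Martin: translate of the standard Gaussian as a density. -/
lemma gaussianReal_translate (c : ℝ) :
    gaussianReal c 1 = (gaussianReal 0 1).withDensity
      (fun y => ENNReal.ofReal (Real.exp (c * y - c ^ 2 / 2))) := by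
  rw [gaussianReal_of_var_ne_zero _ one_ne_zero, gaussianReal_of_var_ne_zero _ one_ne_zero,
    ← withDensity_mul _ (measurable_gaussianPDF 0 1)
      (by exact (measurable_const.mul measurable_id').sub_const _ |>.exp.ennreal_ofReal)]
  congr 1
  ext y
  rw [Pi.mul_apply, gaussianPDF, gaussianPDF,
    ← ENNReal.ofReal_mul (gaussianPDFReal_nonneg _ _ _)]
  congr 1
  simp only [gaussianPDFReal, NNReal.coe_one, mul_one, sub_zero]
  rw [mul_assoc, ← Real.exp_add]
  congr 2
  ring

/-- The Gaussian translation density kernel. -/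
noncomputable def gk {m : ℕ} (x y : Fin m → ℝ) : ℝ≥0∞ :=
  ENNReal.ofReal (Real.exp (∑ i, x i * y i - ∑ i, x i ^ 2 / 2))

lemma gk_eq_prod {m : ℕ} (x y : Fin m → ℝ) :
    gk x y = ∏ i, ENNReal.ofReal (Real.exp (x i * y i - x i ^ 2 / 2)) := by
  rw [gk, ← ENNReal.ofReal_prod_of_nonneg (fun i _ => (Real.exp_pos _).le), ← Real.exp_sum,
    Finset.sum_sub_distrib]

lemma measurable_gk {m : ℕ} :
    Measurable (fun p : (Fin m → ℝ) × (Fin m → ℝ) => gk p.1 p.2) := by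
  unfold gk
  refine Measurable.ennreal_ofReal (Measurable.exp (Measurable.sub ?_ ?_))
  · exact Finset.measurable_sum _ fun i _ =>
      ((measurable_pi_apply i).comp measurable_fst).mul
        ((measurable_pi_apply i).comp measurable_snd)
  · exact Finset.measurable_sum _ fun i _ =>
      (((measurable_pi_apply i).comp measurable_fst).pow_const 2).div_const 2

lemma measurable_gk_left {m : ℕ} (x : Fin m → ℝ) : Measurable (fun y => gk x y) := by
  unfold gk
  exact (Measurable.sub
    (Finset.measurable_sum _ fun i _ => by exact (measurable_pi_apply i : Measurable fun y : Fin m → ℝ => y i).const_mul (x i))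
    measurable_const).exp.ennreal_ofReal

lemma stdGaussian_map_add {m : ℕ} (x : Fin m → ℝ) :
    (stdGaussian m).map (· + x) = (stdGaussian m).withDensity (gk x) := by
  have hmeas : Measurable (fun y : Fin m → ℝ => y + x) := by
    rw [measurable_pi_iff]
    exact fun i => by simp only [Pi.add_apply]; exact (measurable_pi_apply i : Measurable fun y : Fin m → ℝ => y i).add_const (x i)
  have h1 : (stdGaussian m).map (· + x) = Measure.pi (fun i => gaussianReal (x i) 1) := by
    refine (Measure.pi_eq fun s hs => ?_).symm
    rw [Measure.map_apply hmeas (MeasurableSet.univ_pi hs)]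
    have hpre : (· + x) ⁻¹' Set.pi Set.univ s
        = Set.pi Set.univ (fun i => (· + x i) ⁻¹' s i) := by
      ext y
      simp [Set.mem_pi]
    rw [hpre, _root_.stdGaussian, Measure.pi_pi]
    refine Finset.prod_congr rfl fun i _ => ?_
    rw [← Measure.map_apply (measurable_add_const (x i)) (hs i),
      gaussianReal_map_add_const, zero_add]
  have h2 : (stdGaussian m).withDensity (gk x)
      = Measure.pi (fun i => gaussianReal (x i) 1) := by
    refine (Measure.pi_eq fun s hs => ?_).symm
    rw [withDensity_apply _ (MeasurableSet.univ_pi hs)]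
    have hind : ∀ y : Fin m → ℝ,
        Set.indicator (Set.pi Set.univ s) (gk x) y
          = ∏ i, Set.indicator (s i)
              (fun t => ENNReal.ofReal (Real.exp (x i * t - x i ^ 2 / 2))) (y i) := by
      intro y
      by_cases hy : y ∈ Set.pi Set.univ s
      · rw [Set.indicator_of_mem hy, gk_eq_prod]
        exact Finset.prod_congr rfl fun i _ =>
          (Set.indicator_of_mem (hy i (Set.mem_univ i))
            (fun t => ENNReal.ofReal (Real.exp (x i * t - x i ^ 2 / 2)))).symm
      · rw [Set.indicator_of_notMem hy]
        have : ∃ i, y i ∉ s i := by simpa [Set.mem_pi] using hy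
        obtain ⟨i, hi⟩ := this
        exact (Finset.prod_eq_zero (Finset.mem_univ i)
          (Set.indicator_of_notMem hi _)).symm
    rw [← lintegral_indicator (MeasurableSet.univ_pi hs), lintegral_congr hind]
    have hmeasi : ∀ i : Fin m,
        Measurable ((s i).indicator (fun t => ENNReal.ofReal (Real.exp (x i * t - x i ^ 2 / 2)))) :=
      fun i => Measurable.indicator
        ((measurable_const.mul measurable_id).sub_const _ |>.exp.ennreal_ofReal) (hs i)
    rw [show (stdGaussian m) = Measure.pi (fun _ : Fin m => gaussianReal 0 1) from rfl,
      lintegral_pi_prod (fun _ : Fin m => gaussianReal 0 1)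
        (fun i => (s i).indicator (fun t => ENNReal.ofReal (Real.exp (x i * t - x i ^ 2 / 2))))
        hmeasi]
    refine Finset.prod_congr rfl fun i _ => ?_
    rw [lintegral_indicator (hs i), gaussianReal_translate (x i), withDensity_apply _ (hs i)]
  rw [h1, h2]

lemma lintegral_gk {m : ℕ} (x : Fin m → ℝ) : ∫⁻ y, gk x y ∂stdGaussian m = 1 := by
  haveI : IsProbabilityMeasure (stdGaussian m) := by
    unfold _root_.stdGaussian; infer_instance
  have hmeas : Measurable (fun y : Fin m → ℝ => y + x) := by
    rw [measurable_pi_iff]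
    exact fun i => by simp only [Pi.add_apply]; exact (measurable_pi_apply i : Measurable fun y : Fin m → ℝ => y i).add_const (x i)
  calc ∫⁻ y, gk x y ∂stdGaussian m
      = ((stdGaussian m).withDensity (gk x)) Set.univ := by
        rw [withDensity_apply _ MeasurableSet.univ, Measure.restrict_univ]
    _ = ((stdGaussian m).map (· + x)) Set.univ := by rw [stdGaussian_map_add]
    _ = 1 := by
        rw [Measure.map_apply hmeas MeasurableSet.univ, Set.preimage_univ, measure_univ]

lemma gk_mul_gk {m : ℕ} (x x' y : Fin m → ℝ) :
    gk x y * gk x' y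
      = ENNReal.ofReal (Real.exp (∑ i, x i * x' i)) * gk (x + x') y := by
  rw [gk, gk, gk, ← ENNReal.ofReal_mul (Real.exp_pos _).le,
    ← ENNReal.ofReal_mul (Real.exp_pos _).le, ← Real.exp_add, ← Real.exp_add]
  congr 2
  simp only [Pi.add_apply]
  have h1 : ∑ i, (x i + x' i) * y i = ∑ i, x i * y i + ∑ i, x' i * y i := by
    rw [← Finset.sum_add_distrib]
    exact Finset.sum_congr rfl fun i _ => by ring
  have h2 : ∑ i, (x i + x' i) ^ 2 / 2
      = (∑ i, x i ^ 2 / 2 + ∑ i, x' i ^ 2 / 2) + ∑ i, x i * x' i := by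
    rw [← Finset.sum_add_distrib, ← Finset.sum_add_distrib]
    exact Finset.sum_congr rfl fun i _ => by ring
  rw [h1, h2]
  ring

end Aux

/-- The χ²-divergence from the Gaussian location mixture `N(0,I_m) * P` (the law of `G + X`
with `G ∼ N(0,I_m)`, `X ∼ P` independent) to the standard Gaussian `N(0,I_m)` equals
`E[exp⟨X, X'⟩] − 1`, where `X, X'` are i.i.d. with law `P`. -/
theorem stmt3 {m : ℕ} (P : Measure (Fin m → ℝ)) [IsProbabilityMeasure P] :
    chiSqDiv (((stdGaussian m).prod P).map (fun q => q.1 + q.2)) (stdGaussian m)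
      = (∫⁻ q, ENNReal.ofReal (Real.exp (∑ i, q.1 i * q.2 i)) ∂(P.prod P)) - 1 := by
  haveI : IsProbabilityMeasure (stdGaussian m) := by
    unfold _root_.stdGaussian; infer_instance
  set Q := stdGaussian m with hQ
  have hk : Measurable (fun p : (Fin m → ℝ) × (Fin m → ℝ) => gk p.1 p.2) := measurable_gk
  have hg : Measurable (fun y => ∫⁻ x, gk x y ∂P) :=
    Measurable.lintegral_prod_left' hk
  have hadd : Measurable (fun q : (Fin m → ℝ) × (Fin m → ℝ) => q.1 + q.2) :=
    measurable_fst.add measurable_snd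
  have hM : (Q.prod P).map (fun q => q.1 + q.2)
      = Q.withDensity (fun y => ∫⁻ x, gk x y ∂P) := by
    ext s hs
    rw [Measure.map_apply hadd hs, Measure.prod_apply_symm (hadd hs),
      withDensity_apply _ hs]
    have hfib : ∀ x, (fun y => (y, x)) ⁻¹' ((fun q : (Fin m → ℝ) × (Fin m → ℝ) => q.1 + q.2) ⁻¹' s)
        = (· + x) ⁻¹' s := fun x => rfl
    calc ∫⁻ x, Q ((fun y => (y, x)) ⁻¹' ((fun q : (Fin m → ℝ) × (Fin m → ℝ) => q.1 + q.2) ⁻¹' s)) ∂P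
        = ∫⁻ x, ∫⁻ y in s, gk x y ∂Q ∂P := by
          refine lintegral_congr fun x => ?_
          rw [hfib x, ← Measure.map_apply (by
            rw [measurable_pi_iff]
            exact fun i => by simp only [Pi.add_apply]; exact (measurable_pi_apply i : Measurable fun y : Fin m → ℝ => y i).add_const (x i)) hs,
            hQ, stdGaussian_map_add, withDensity_apply _ hs]
      _ = ∫⁻ y in s, ∫⁻ x, gk x y ∂P ∂Q := lintegral_lintegral_swap hk.aemeasurable
  rw [chiSqDiv, hM]
  have hrn := Measure.rnDeriv_withDensity Q hg
  have hre : ∫⁻ y, ((Q.withDensity (fun y => ∫⁻ x, gk x y ∂P)).rnDeriv Q y) ^ 2 ∂Q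
      = ∫⁻ y, (∫⁻ x, gk x y ∂P) ^ 2 ∂Q :=
    lintegral_congr_ae (hrn.mono fun y hy => by dsimp only; rw [hy])
  rw [hre]
  congr 1
  calc ∫⁻ y, (∫⁻ x, gk x y ∂P) ^ 2 ∂Q
      = ∫⁻ y, ∫⁻ p, gk p.1 y * gk p.2 y ∂(P.prod P) ∂Q := by
        refine lintegral_congr fun y => ?_
        have hmy : AEMeasurable (fun x => gk x y) P :=
          (hk.comp (measurable_id.prodMk measurable_const)).aemeasurable
        rw [sq, ← lintegral_prod_mul hmy hmy]
    _ = ∫⁻ p, ∫⁻ y, gk p.1 y * gk p.2 y ∂Q ∂(P.prod P) := by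
        refine lintegral_lintegral_swap ?_
        exact ((hk.comp ((measurable_fst.comp measurable_snd).prodMk measurable_fst)).mul
          (hk.comp ((measurable_snd.comp measurable_snd).prodMk measurable_fst))).aemeasurable
    _ = ∫⁻ q, ENNReal.ofReal (Real.exp (∑ i, q.1 i * q.2 i)) ∂(P.prod P) := by
        refine lintegral_congr fun p => ?_
        simp_rw [gk_mul_gk]
        rw [lintegral_const_mul _ (measurable_gk_left (p.1 + p.2)), hQ, lintegral_gk, mul_one]
end

section
/- Let N be a positive integer, T > 0 and B ≥ 0, and let x₁, …, x_N be nonnegative reals with Σ_{i=1}^N x_i² ≤ B and x_i ≤ T for all i. Then (1/N)·Σ_{i=1}^N exp(x_i) ≤ 1 + √(B/N) + (B/N)·exp(T)/T². -/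
open Finset Nat

set_option maxHeartbeats 1000000 in
lemma exp_le_quadratic (T : ℝ) (hT : 0 < T) (x : ℝ) (hx0 : 0 ≤ x) (hxT : x ≤ T) :
    Real.exp x ≤ 1 + x + x ^ 2 * Real.exp T / T ^ 2 := by
  have hexp : ∀ y : ℝ, Real.exp y = ∑' n : ℕ, y ^ n / (n !) := by
    intro y
    rw [Real.exp_eq_exp_ℝ, NormedSpace.exp_eq_tsum_div]
  have hsx : Summable (fun n : ℕ => x ^ n / (n !)) := Real.summable_pow_div_factorial x
  have hsT : Summable (fun n : ℕ => T ^ n / (n !)) := Real.summable_pow_div_factorial T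
  have hsx2 : Summable (fun n : ℕ => x ^ (n + 2) / (n + 2)!) :=
    (summable_nat_add_iff 2).2 hsx
  have hsT2 : Summable (fun n : ℕ => T ^ (n + 2) / (n + 2)!) :=
    (summable_nat_add_iff 2).2 hsT
  have hsplit : ∀ (y : ℝ), Real.exp y = 1 + y + ∑' n : ℕ, y ^ (n + 2) / (n + 2)! := by
    intro y
    have := hsx -- dummy
    have h := Summable.sum_add_tsum_nat_add 2 (Real.summable_pow_div_factorial y)
    rw [hexp y, ← h]
    simp [Finset.sum_range_succ]
  have htail : (∑' n : ℕ, x ^ (n + 2) / (n + 2)!)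
      ≤ (x ^ 2 / T ^ 2) * ∑' n : ℕ, T ^ (n + 2) / (n + 2)! := by
    rw [← tsum_mul_left]
    refine Summable.tsum_le_tsum (fun n => ?_) hsx2 (hsT2.mul_left _)
    have h2 : x ^ n ≤ T ^ n := pow_le_pow_left₀ hx0 hxT n
    have hfac : (0:ℝ) < ((n + 2)! : ℝ) := by positivity
    have hrhs : x ^ 2 / T ^ 2 * (T ^ (n + 2) / ((n + 2)! : ℝ)) = x ^ 2 * T ^ n / ((n + 2)! : ℝ) := by
      field_simp
      ring
    have hlhs : x ^ (n + 2) = x ^ 2 * x ^ n := by ring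
    rw [hrhs, hlhs]
    gcongr
  have hTtail : (∑' n : ℕ, T ^ (n + 2) / (n + 2)!) ≤ Real.exp T := by
    rw [hsplit T]
    nlinarith [hT]
  have hx2 : (0:ℝ) ≤ x ^ 2 / T ^ 2 := by positivity
  calc Real.exp x = 1 + x + ∑' n : ℕ, x ^ (n + 2) / (n + 2)! := hsplit x
    _ ≤ 1 + x + (x ^ 2 / T ^ 2) * Real.exp T := by
        have := htail.trans (mul_le_mul_of_nonneg_left hTtail hx2)
        linarith
    _ = 1 + x + x ^ 2 * Real.exp T / T ^ 2 := by ring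

/-- Averaged exponential bound: if `x₁, …, x_N ≥ 0` satisfy `∑ xᵢ² ≤ B` and `xᵢ ≤ T`, then
`(1/N) ∑ exp(xᵢ) ≤ 1 + √(B/N) + (B/N) exp(T)/T²`. -/
theorem stmt7 (N : ℕ) (hN : 0 < N) (T B : ℝ) (hT : 0 < T) (hB : 0 ≤ B)
    (x : Fin N → ℝ) (hx : ∀ i, 0 ≤ x i) (hsum : ∑ i, (x i) ^ 2 ≤ B)
    (hxT : ∀ i, x i ≤ T) :
    (1 / N : ℝ) * ∑ i, Real.exp (x i)
      ≤ 1 + Real.sqrt (B / N) + (B / N) * Real.exp T / T ^ 2 := by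
  have hNpos : (0:ℝ) < N := Nat.cast_pos.2 hN
  have h1 : ∑ i, Real.exp (x i) ≤ ∑ i, (1 + x i + (x i) ^ 2 * Real.exp T / T ^ 2) :=
    Finset.sum_le_sum fun i _ => exp_le_quadratic T hT (x i) (hx i) (hxT i)
  have hCS : (∑ i, x i) ^ 2 ≤ N * ∑ i, (x i) ^ 2 := by
    simpa using sq_sum_le_card_mul_sum_sq (s := Finset.univ) (f := x)
  have hsumx : ∑ i, x i ≤ Real.sqrt (N * B) := by
    rw [← Real.sqrt_sq (Finset.sum_nonneg fun i _ => hx i)]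
    exact Real.sqrt_le_sqrt (hCS.trans (by nlinarith))
  have hsplit : ∑ i, (1 + x i + (x i) ^ 2 * Real.exp T / T ^ 2)
      = N + (∑ i, x i) + (∑ i, (x i) ^ 2) * Real.exp T / T ^ 2 := by
    rw [Finset.sum_add_distrib, Finset.sum_add_distrib, ← Finset.sum_div,
      ← Finset.sum_mul]
    simp
  have hsqrt : Real.sqrt (N * B) / N = Real.sqrt (B / N) := by
    rw [← Real.sqrt_sq hNpos.le, ← Real.sqrt_div' _ (by positivity)]
    congr 1
    field_simp
    rw [Real.sq_sqrt (by positivity)]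
  have hexpT : (0:ℝ) < Real.exp T := Real.exp_pos T
  have hT2 : (0:ℝ) < T ^ 2 := by positivity
  calc (1 / N : ℝ) * ∑ i, Real.exp (x i)
      ≤ (1 / N : ℝ) * (N + (∑ i, x i) + (∑ i, (x i) ^ 2) * Real.exp T / T ^ 2) := by
        rw [← hsplit]
        exact mul_le_mul_of_nonneg_left h1 (by positivity)
    _ = 1 + (∑ i, x i) / N + ((∑ i, (x i) ^ 2) / N) * Real.exp T / T ^ 2 := by
        field_simp
    _ ≤ 1 + Real.sqrt (B / N) + (B / N) * Real.exp T / T ^ 2 := by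
        have h2 : (∑ i, x i) / N ≤ Real.sqrt (B / N) := by
          rw [← hsqrt]
          exact div_le_div_of_nonneg_right hsumx hNpos.le
        have h3 : ((∑ i, (x i) ^ 2) / N) * Real.exp T / T ^ 2
            ≤ (B / N) * Real.exp T / T ^ 2 := by
          have : (∑ i, (x i) ^ 2) / N ≤ B / N := div_le_div_of_nonneg_right hsum hNpos.le
          exact div_le_div_of_nonneg_right (mul_le_mul_of_nonneg_right this hexpT.le) hT2.le
        linarith
end
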